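/- Let r ≥ 1 be an integer and let p ∈ ℝ[X] be a monic polynomial of degree r+1 whose coefficient of X^r equals 0. If p^{(l)}(a) = 0 for every 1 ≤ l ≤ r−1, then p(x) = p(a) + (x + r·a)·(x − a)^r for all real x (equivalently, as polynomials, p = C(p(a)) + (X + C(r·a))·(X − C(a))^r, where C denotes the constant polynomial). -/
import Mathlib


open Polynomial

/-- If `p ∈ ℝ[X]` is monic of degree `r+1` with vanishing coefficient of `X^r`,
and `p^{(l)}(a) = 0` for every `1 ≤ l ≤ r-1`, then
`p = p(a) + (X + r·a)·(X − a)^r`. -/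
theorem stmt12 (r : ℕ) (hr : 1 ≤ r) (p : Polynomial ℝ)
    (hmonic : p.Monic) (hdeg : p.natDegree = r + 1) (hcoeff : p.coeff r = 0)
    (a : ℝ)
    (hder : ∀ l : ℕ, 1 ≤ l → l ≤ r - 1 → (derivative^[l] p).eval a = 0) :
    p = C (p.eval a) + (X + C ((r : ℝ) * a)) * (X - C a) ^ r := by
  have hlead : p.coeff (r+1) = 1 := by
    have := hmonic.coeff_natDegree; rwa [hdeg] at this
  have hmid : ∀ i : ℕ, 1 ≤ i → i ≤ r - 1 → (taylor a p).coeff i = 0 := by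
    intro i h1 h2
    rw [taylor_coeff]
    have h := hder i h1 h2
    rw [← factorial_smul_hasseDeriv] at h
    simp only [LinearMap.smul_apply, eval_smul] at h
    rw [nsmul_eq_mul] at h
    have hne : ((Nat.factorial i : ℝ)) ≠ 0 := by exact_mod_cast Nat.factorial_ne_zero i
    exact (mul_eq_zero.1 h).resolve_left hne
  have hdegH : ∀ k, (hasseDeriv k p).natDegree ≤ r + 1 - k := by
    intro k
    have := natDegree_hasseDeriv_le p k
    omega
  have hcr : (taylor a p).coeff r = ((r : ℝ) + 1) * a := by
    rw [taylor_coeff]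
    have hd : (hasseDeriv r p).natDegree < 2 := by have := hdegH r; omega
    rw [eval_eq_sum_range' hd]
    simp only [Finset.sum_range_succ, Finset.sum_range_zero, hasseDeriv_coeff,
      zero_add, Nat.choose_self, hcoeff, pow_zero, pow_one]
    rw [Nat.add_comm 1 r, hlead, Nat.choose_succ_self_right]
    push_cast; ring
  have hcr1 : (taylor a p).coeff (r+1) = 1 := by
    rw [taylor_coeff]
    have hd : (hasseDeriv (r+1) p).natDegree < 1 := by have := hdegH (r+1); omega
    rw [eval_eq_sum_range' hd]
    simp [hasseDeriv_coeff, hlead]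
  have key := sum_taylor_eq p a
  rw [sum_over_range' (taylor a p) (fun n => by simp) (r+2)
    (by rw [natDegree_taylor, hdeg]; omega)] at key
  rw [Finset.sum_range_succ, Finset.sum_range_succ] at key
  have hz : ∑ i ∈ Finset.range r, C ((taylor a p).coeff i) * (X - C a) ^ i
      = C (p.eval a) := by
    rw [Finset.sum_eq_single_of_mem 0 (Finset.mem_range.2 hr)]
    · simp [taylor_coeff_zero]
    · intro i hi hi0
      rw [hmid i (by omega) (by
        have := Finset.mem_range.1 hi; omega)]
      simp
  rw [hz, hcr, hcr1] at key
  have hC : C (((r:ℝ) + 1) * a) = C ((r:ℝ) * a) + C a := by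
    rw [add_mul, one_mul, map_add]
  have hfin : C (p.eval a) + (X + C ((r:ℝ) * a)) * (X - C a) ^ r
      = C (p.eval a) + C (((r:ℝ) + 1) * a) * (X - C a) ^ r + C 1 * (X - C a) ^ (r + 1) := by
    rw [hC]; simp only [map_one, one_mul]; ring
  rw [hfin]
  exact key.symm
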